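/- Let q be an even prime power, K = F_{q^m}, and 1 ≤ n ≤ m. Let C ⊆ K^n be a K-linear MRD code of dimension k ≥ 1 (i.e. with minimum rank distance n − k + 1). Then C is not Euclidean self-orthogonal: C ⊄ C^{⊥_E}. -/
import Mathlib


/-- Euclidean dual of a code `C ⊆ K^n`. -/
noncomputable def euclDual {K : Type*} [Field K] (n : ℕ) (C : Submodule K (Fin n → K)) :
    Submodule K (Fin n → K) :=
  ⨅ c ∈ C, LinearMap.ker (∑ i : Fin n, (c i) • (LinearMap.proj i : (Fin n → K) →ₗ[K] K))

/-- for `q` even, `K = F_{q^m}`, `1 ≤ n ≤ m`, an `F_{q^m}`-linear MRD code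
`C ⊆ K^n` of dimension `k ≥ 1` (minimum rank distance `n - k + 1`) is never Euclidean
self-orthogonal. -/
theorem stmt18 (m n k : ℕ) (hm : 1 ≤ m) (hn1 : 1 ≤ n) (hnm : n ≤ m) (hk : 1 ≤ k)
    (F : Type*) [Field F] [Fintype F] (hq : Even (Fintype.card F))
    (K : Type*) [Field K] [Fintype K] [Algebra F K]
    (hK : Fintype.card K = Fintype.card F ^ m)
    (C : Submodule K (Fin n → K)) (hdim : Module.finrank K C = k)
    (hMRD : (∀ c ∈ C, c ≠ 0 →
        n - k + 1 ≤ Module.finrank F (Submodule.span F (Set.range c))) ∧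
      ∃ c ∈ C, c ≠ 0 ∧ Module.finrank F (Submodule.span F (Set.range c)) = n - k + 1) :
    ¬ C ≤ euclDual n C := by
  classical
  haveI : NeZero n := ⟨by omega⟩
  intro hle
  -- K has characteristic 2
  have hcharK : ringChar K = 2 := by
    rw [FiniteField.even_card_iff_char_two, hK]
    rcases hq with ⟨r, hr⟩
    have : Fintype.card F % 2 = 0 := by omega
    rw [Nat.pow_mod, this, Nat.zero_pow (by omega), Nat.zero_mod]
  haveI : CharP K 2 := by rw [← hcharK]; exact ringChar.charP K
  -- every codeword has coordinate sum zero
  have hsum : ∀ c ∈ C, ∑ i, c i = 0 := by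
    intro c hc
    have h1 : c ∈ euclDual n C := hle hc
    simp only [euclDual, Submodule.mem_iInf] at h1
    have h2 := h1 c hc
    rw [LinearMap.mem_ker] at h2
    simp only [LinearMap.sum_apply, LinearMap.smul_apply, LinearMap.proj_apply,
      smul_eq_mul] at h2
    have h3 : (∑ i, c i) * ∑ i, c i = 0 := by
      rw [CharTwo.sum_mul_self]; exact h2
    exact (mul_self_eq_zero).mp h3
  -- k ≤ n
  have hkn : k ≤ n := by
    have := hdim ▸ (Submodule.finrank_le C)
    simpa [Module.finrank_pi] using this
  -- find nonzero c ∈ C vanishing on coordinates 1,...,k-1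
  obtain ⟨c, hcC, hcne, hczero⟩ : ∃ c, c ∈ C ∧ c ≠ 0 ∧
      ∀ i : Fin n, 1 ≤ (i : ℕ) → (i : ℕ) < k → c i = 0 := by
    let L : C →ₗ[K] (Fin (k-1) → K) :=
      { toFun := fun c j => (c : Fin n → K) ⟨j + 1, by omega⟩
        map_add' := by intros; rfl
        map_smul' := by intros; rfl }
    have hker : LinearMap.ker L ≠ ⊥ := by
      intro hbot
      have hinj : Function.Injective L := LinearMap.ker_eq_bot.mp hbot
      have := LinearMap.finrank_le_finrank_of_injective hinj
      rw [hdim, Module.finrank_pi] at this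
      simp at this
      omega
    obtain ⟨⟨c, hcC⟩, hcker, hcne⟩ := Submodule.exists_mem_ne_zero_of_ne_bot hker
    refine ⟨c, hcC, ?_, ?_⟩
    · intro h; apply hcne; exact Subtype.ext h
    · intro i h1 hik
      have := congrFun hcker ⟨(i : ℕ) - 1, by omega⟩
      simpa only [L, LinearMap.coe_mk, AddHom.coe_mk, Pi.zero_apply,
        show (i:ℕ) - 1 + 1 = (i:ℕ) by omega, Fin.eta] using this
  -- the "tail" coordinates
  set T : Finset (Fin n) := Finset.univ.filter (fun i => k ≤ (i : ℕ)) with hT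
  have hTcard : T.card = n - k := by
    have h1 : T.card = ((Finset.range n).filter (fun x => k ≤ x)).card := by
      rw [hT, Finset.card_filter, Finset.card_filter,
        Fin.sum_univ_eq_sum_range (fun i => if k ≤ i then 1 else 0)]
    rw [h1, Finset.range_eq_Ico, Finset.Ico_filter_le, Nat.card_Ico]
    omega
  -- c 0 = -∑ i in T, c i  (indeed sum over univ splits)
  have h0T : (0 : Fin n) ∉ T := by simp [hT]; omega
  have hsplit : ∑ i ∈ insert (0 : Fin n) T, c i = ∑ i, c i := by
    apply Finset.sum_subset (Finset.subset_univ _)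
    intro i _ hi
    simp only [Finset.mem_insert, hT, Finset.mem_filter, Finset.mem_univ, true_and,
      not_or, not_le] at hi
    exact hczero i (Nat.one_le_iff_ne_zero.mpr (fun h => hi.1 (Fin.eq_of_val_eq (by simp [h])))) hi.2
  have hc0 : c 0 = -∑ i ∈ T, c i := by
    have h := hsum c hcC
    rw [← hsplit, Finset.sum_insert h0T] at h
    exact eq_neg_of_add_eq_zero_left h
  have hsub : Set.range c ⊆ ↑(Submodule.span F ((T.image c : Finset K) : Set K)) := by
    rintro x ⟨i, rfl⟩
    by_cases hiT : i ∈ T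
    · exact Submodule.subset_span (Finset.mem_coe.mpr (Finset.mem_image_of_mem c hiT))
    · by_cases hi0 : i = 0
      · subst hi0; rw [hc0]
        exact neg_mem (Submodule.sum_mem _ (fun j hj => Submodule.subset_span
          (Finset.mem_coe.mpr (Finset.mem_image_of_mem c hj))))
      · have hci : c i = 0 := by
          apply hczero i (Nat.one_le_iff_ne_zero.mpr (fun h => hi0 (Fin.eq_of_val_eq (by simp [h]))))
          simp only [hT, Finset.mem_filter, Finset.mem_univ, true_and, not_le] at hiT
          omega
        rw [hci]; exact zero_mem _
  haveI : FiniteDimensional F K := Module.Finite.of_finite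
  have hfr : Module.finrank F (Submodule.span F (Set.range c)) ≤ n - k := by
    calc Module.finrank F (Submodule.span F (Set.range c))
        ≤ Module.finrank F (Submodule.span F ((T.image c : Finset K) : Set K)) :=
          Submodule.finrank_mono (Submodule.span_le.mpr hsub)
      _ ≤ (T.image c).card := finrank_span_finset_le_card _
      _ ≤ T.card := Finset.card_image_le
      _ = n - k := hTcard
  have := hMRD.1 c hcC hcne
  omega
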